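/- arXiv:1104.5265 — 2 statements merged into one kernel-verified Lean document; each statement's English description precedes it below -/
import Mathlib

section
/- Let A be a separable C*-algebra. Then A is WSP1 if and only if its unitization Ã is weakly semiprojective. -/
universe u v

/-- A separable C*-algebra `A` is *weakly semiprojective* (WSP) if for every separable
C*-algebra `B` with an increasing sequence `J₁ ⊆ J₂ ⊆ ⋯` of closed two-sided ideals,
`J` the closure of `⋃ n, Jₙ`, and every `*`-homomorphism `φ : A → B/J`, there is a sequence
of `*`-homomorphisms `ψₙ : A → B/Jₙ` with `πₙ (ψₙ a) → φ a` in norm for every `a ∈ A`,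
where `πₙ : B/Jₙ → B/J` is the induced quotient map.

The quotients are encoded by surjective `*`-homomorphisms: `qₙ : B → Cₙ` plays the role of
the quotient map `B → B/Jₙ` (so `Jₙ = ker qₙ`), `p : B → D` plays the role of `B → B/J`
(so `J = ker p`), and `πₙ : Cₙ → D` is the induced map, determined by `πₙ ∘ qₙ = p`.
The ideal conditions become `ker qₙ ⊆ ker qₙ₊₁` and `ker p = closure (⋃ n, ker qₙ)`. -/
def IsWSP (A : Type u) [NonUnitalNormedRing A] [StarRing A]
    [NormedSpace ℂ A] [IsScalarTower ℂ A A] [SMulCommClass ℂ A A] [StarModule ℂ A] :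
    Prop :=
  ∀ (B : Type v) [NonUnitalNormedRing B] [StarRing B] [CStarRing B] [CompleteSpace B]
    [NormedSpace ℂ B] [IsScalarTower ℂ B B] [SMulCommClass ℂ B B] [StarModule ℂ B]
    [TopologicalSpace.SeparableSpace B]
    (C : ℕ → Type v) [∀ n, NonUnitalNormedRing (C n)] [∀ n, StarRing (C n)]
    [∀ n, CStarRing (C n)] [∀ n, CompleteSpace (C n)] [∀ n, NormedSpace ℂ (C n)]
    [∀ n, IsScalarTower ℂ (C n) (C n)] [∀ n, SMulCommClass ℂ (C n) (C n)]
    [∀ n, StarModule ℂ (C n)]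
    (D : Type v) [NonUnitalNormedRing D] [StarRing D] [CStarRing D] [CompleteSpace D]
    [NormedSpace ℂ D] [IsScalarTower ℂ D D] [SMulCommClass ℂ D D] [StarModule ℂ D]
    (q : ∀ n, B →⋆ₙₐ[ℂ] C n) (p : B →⋆ₙₐ[ℂ] D) (π : ∀ n, C n →⋆ₙₐ[ℂ] D),
    (∀ n, Function.Surjective (q n)) → Function.Surjective p →
    (∀ n, (π n).comp (q n) = p) →
    (∀ n, {b : B | q n b = 0} ⊆ {b : B | q (n + 1) b = 0}) →
    {b : B | p b = 0} = closure (⋃ n, {b : B | q n b = 0}) →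
    ∀ φ : A →⋆ₙₐ[ℂ] D,
      ∃ ψ : ∀ n, A →⋆ₙₐ[ℂ] C n,
        ∀ a : A,
          Filter.Tendsto (fun n => π n (ψ n a)) Filter.atTop (nhds (φ a))

/-- A separable C*-algebra `A` is *weakly semiprojective with respect to unital
C*-algebras* (WSP1) if the approximate lifting property defining weak semiprojectivity
holds whenever `B` is a separable **unital** C*-algebra: for every increasing sequence
`J₁ ⊆ J₂ ⊆ ⋯` of closed two-sided ideals of `B` with `J` the closure of `⋃ n, Jₙ`, and
every (not necessarily unital) `*`-homomorphism `φ : A → B/J`, there is a sequence of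
`*`-homomorphisms `ψₙ : A → B/Jₙ` with `πₙ (ψₙ a) → φ a` in norm for every `a ∈ A`.

The quotients are encoded by surjective `*`-homomorphisms: `qₙ : B → Cₙ` plays the role of
the quotient map `B → B/Jₙ` (so `Jₙ = ker qₙ`), `p : B → D` plays the role of `B → B/J`
(so `J = ker p`), and `πₙ : Cₙ → D` is the induced map, determined by `πₙ ∘ qₙ = p`.
The ideal conditions become `ker qₙ ⊆ ker qₙ₊₁` and `ker p = closure (⋃ n, ker qₙ)`. -/
def IsWSP1 (A : Type u) [NonUnitalNormedRing A] [StarRing A]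
    [NormedSpace ℂ A] [IsScalarTower ℂ A A] [SMulCommClass ℂ A A] [StarModule ℂ A] :
    Prop :=
  ∀ (B : Type v) [NormedRing B] [StarRing B] [CStarRing B] [CompleteSpace B]
    [NormedAlgebra ℂ B] [StarModule ℂ B] [TopologicalSpace.SeparableSpace B]
    (C : ℕ → Type v) [∀ n, NonUnitalNormedRing (C n)] [∀ n, StarRing (C n)]
    [∀ n, CStarRing (C n)] [∀ n, CompleteSpace (C n)] [∀ n, NormedSpace ℂ (C n)]
    [∀ n, IsScalarTower ℂ (C n) (C n)] [∀ n, SMulCommClass ℂ (C n) (C n)]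
    [∀ n, StarModule ℂ (C n)]
    (D : Type v) [NonUnitalNormedRing D] [StarRing D] [CStarRing D] [CompleteSpace D]
    [NormedSpace ℂ D] [IsScalarTower ℂ D D] [SMulCommClass ℂ D D] [StarModule ℂ D]
    (q : ∀ n, B →⋆ₙₐ[ℂ] C n) (p : B →⋆ₙₐ[ℂ] D) (π : ∀ n, C n →⋆ₙₐ[ℂ] D),
    (∀ n, Function.Surjective (q n)) → Function.Surjective p →
    (∀ n, (π n).comp (q n) = p) →
    (∀ n, {b : B | q n b = 0} ⊆ {b : B | q (n + 1) b = 0}) →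
    {b : B | p b = 0} = closure (⋃ n, {b : B | q n b = 0}) →
    ∀ φ : A →⋆ₙₐ[ℂ] D,
      ∃ ψ : ∀ n, A →⋆ₙₐ[ℂ] C n,
        ∀ a : A,
          Filter.Tendsto (fun n => π n (ψ n a)) Filter.atTop (nhds (φ a))


namespace WSPAux

section CStar
variable {X Y Z : Type*} [NonUnitalCStarAlgebra X] [NonUnitalCStarAlgebra Y]
  [NonUnitalCStarAlgebra Z]

lemma cont (φ : X →⋆ₙₐ[ℂ] Y) : Continuous φ :=
  AddMonoidHomClass.continuous_of_bound φ 1 fun a => by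
    simpa using NonUnitalStarAlgHom.norm_apply_le φ a

lemma abs_le_norm {z : X} {t : ℝ} (ht : t ∈ quasispectrum ℝ z) : |t| ≤ ‖z‖ := by
  rw [Unitization.quasispectrum_eq_spectrum_inr' ℝ ℂ z] at ht
  simpa [Unitization.norm_inr] using spectrum.norm_le_norm_of_mem ht

lemma quasi_quadratic {z : X} (hz : IsSelfAdjoint z) {t : ℝ}
    (ht : t ∈ quasispectrum ℝ z) : |t * t - t| ≤ ‖z * z - z‖ := by
  have h1 : cfcₙ (fun s : ℝ => s * s - s) z = z * z - z := by
    rw [cfcₙ_sub _ _ z, cfcₙ_mul _ _ z, cfcₙ_id' ℝ z]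
  refine abs_le_norm ?_
  rw [← h1, cfcₙ_map_quasispectrum (fun s : ℝ => s * s - s) z]
  exact ⟨t, ht, rfl⟩

noncomputable def f : ℝ → ℝ := fun t => min 1 (max 0 (2 * t - 2⁻¹))

lemma f_cont : Continuous f := by unfold f; fun_prop

lemma f_zero : f 0 = 0 := by norm_num [f]

lemma f_of_le {t : ℝ} (h : t ≤ 4⁻¹) : f t = 0 := by
  have : 2 * t - 2⁻¹ ≤ 0 := by linarith
  simp [f, max_eq_left this]

lemma f_of_ge {t : ℝ} (h : (3:ℝ)/4 ≤ t) : f t = 1 := by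
  have h1 : (1:ℝ) ≤ 2 * t - 2⁻¹ := by linarith
  have h0 : (0:ℝ) ≤ 2 * t - 2⁻¹ := by linarith
  simp [f, max_eq_right h0, min_eq_left h1]

lemma gap {z : X} (hz : IsSelfAdjoint z) (hn : ‖z * z - z‖ < 3/16) :
    ∀ t ∈ quasispectrum ℝ z, t ≤ 4⁻¹ ∨ (3:ℝ)/4 ≤ t := by
  intro t ht
  by_contra hc
  push_neg at hc
  obtain ⟨h1, h2⟩ := hc
  have hb := (quasi_quadratic hz ht).trans_lt hn
  rw [abs_lt] at hb
  nlinarith [mul_pos (sub_pos.mpr h1) (sub_pos.mpr h2)]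

lemma cfcf_sq {z : X} (hz : IsSelfAdjoint z) (hn : ‖z * z - z‖ < 3/16) :
    cfcₙ f z * cfcₙ f z = cfcₙ f z := by
  rw [← cfcₙ_mul f f z (f_cont.continuousOn) f_zero (f_cont.continuousOn) f_zero]
  refine cfcₙ_congr fun t ht => ?_
  rcases gap hz hn t ht with h | h
  · simp [f_of_le h]
  · simp [f_of_ge h]

lemma cfcf_star {z : X} (hz : IsSelfAdjoint z) : star (cfcₙ f z) = cfcₙ f z :=
  (cfcₙ_predicate f z : IsSelfAdjoint _).star_eq

lemma cfcf_proj {h : X} (hh : IsSelfAdjoint h) (hh2 : h * h = h) :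
    cfcₙ f h = h := by
  have he : (quasispectrum ℝ h).EqOn f id := by
    intro t ht
    have h0 := quasi_quadratic hh ht
    rw [hh2, sub_self, norm_zero] at h0
    have h1 : t * t - t = 0 := by
      rw [abs_nonpos_iff] at h0; exact h0
    have h2 : t = 0 ∨ t = 1 := by
      rcases mul_eq_zero.mp (by ring_nf; ring_nf at h1; linarith [h1] : t * (t - 1) = 0) with h | h
      · exact Or.inl h
      · exact Or.inr (by linarith [sub_eq_zero.mp h])
    rcases h2 with rfl | rfl
    · simpa using f_zero
    · simpa using f_of_ge (by norm_num)
  rw [cfcₙ_congr he, cfcₙ_id ℝ h]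

lemma map_cfcf (φ : X →⋆ₙₐ[ℂ] Y) {z : X} (hz : IsSelfAdjoint z) :
    φ (cfcₙ f z) = cfcₙ f (φ z) :=
  NonUnitalStarAlgHomClass.map_cfcₙ φ f z (f_cont.continuousOn) f_zero (cont φ) hz (hz.map φ)

lemma exists_factor (q0 : Z →⋆ₙₐ[ℂ] X) (q1 : Z →⋆ₙₐ[ℂ] Y) (h0 : Function.Surjective q0)
    (hk : ∀ b : Z, q0 b = 0 → q1 b = 0) :
    ∃ r : X →⋆ₙₐ[ℂ] Y, ∀ b, r (q0 b) = q1 b := by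
  have key : ∀ b b' : Z, q0 b = q0 b' → q1 b = q1 b' := by
    intro b b' h
    have := hk (b - b') (by rw [map_sub, h, sub_self])
    rw [map_sub, sub_eq_zero] at this
    exact this
  obtain ⟨s, hs⟩ := Function.Surjective.hasRightInverse h0
  let r0 : X → Y := fun c => q1 (s c)
  have hadd : ∀ c c', r0 (c + c') = r0 c + r0 c' := fun c c' => by
    show q1 (s (c + c')) = q1 (s c) + q1 (s c')
    rw [key (s (c + c')) (s c + s c') (by rw [map_add, hs, hs, hs]), map_add]
  have hzero : r0 0 = 0 := by
    show q1 (s 0) = 0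
    rw [key (s 0) 0 (by rw [hs, map_zero]), map_zero]
  have hmul : ∀ c c', r0 (c * c') = r0 c * r0 c' := fun c c' => by
    show q1 (s (c * c')) = q1 (s c) * q1 (s c')
    rw [key (s (c * c')) (s c * s c') (by rw [map_mul, hs, hs, hs]), map_mul]
  have hsmul : ∀ (m : ℂ) c, r0 (m • c) = m • r0 c := fun m c => by
    show q1 (s (m • c)) = m • q1 (s c)
    rw [key (s (m • c)) (m • s c) (by rw [map_smul, hs, hs]), map_smul]
  have hstar : ∀ c, r0 (star c) = star (r0 c) := fun c => by
    show q1 (s (star c)) = star (q1 (s c))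
    rw [key (s (star c)) (star (s c)) (by rw [map_star, hs, hs]), map_star]
  exact ⟨{ toFun := r0, map_add' := hadd, map_zero' := hzero, map_mul' := hmul,
           map_smul' := hsmul, map_star' := hstar }, fun b => key _ _ (hs (q0 b))⟩

lemma norm_proj_le_one {e : X} (hes : star e = e) (hee : e * e = e) : ‖e‖ ≤ 1 := by
  have h1 : ‖e‖ * ‖e‖ = ‖e‖ := by
    rw [← CStarRing.norm_star_mul_self (x := e), hes, hee]
  nlinarith [norm_nonneg e]

def corner (e : X) (hes : star e = e) : NonUnitalStarSubalgebra ℂ X where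
  carrier := {x | e * x = x ∧ x * e = x}
  add_mem' := fun hx hy =>
    ⟨by rw [mul_add, hx.1, hy.1], by rw [add_mul, hx.2, hy.2]⟩
  zero_mem' := ⟨mul_zero e, zero_mul e⟩
  mul_mem' := fun hx hy => ⟨by rw [← mul_assoc, hx.1], by rw [mul_assoc, hy.2]⟩
  smul_mem' := fun c x hx => ⟨by rw [mul_smul_comm, hx.1], by rw [smul_mul_assoc, hx.2]⟩
  star_mem' := fun hx => ⟨by rw [← hes, ← star_mul, hx.2], by rw [← hes, ← star_mul, hx.1]⟩

lemma mem_corner {e x : X} {hes : star e = e} :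
    x ∈ corner e hes ↔ e * x = x ∧ x * e = x := Iff.rfl

lemma corner_isClosed (e : X) (hes : star e = e) :
    IsClosed ((corner e hes : Set X)) := by
  have : (corner e hes : Set X) = {x | e * x = x} ∩ {x | x * e = x} := rfl
  rw [this]
  exact (isClosed_eq (continuous_const.mul continuous_id) continuous_id).inter
    (isClosed_eq (continuous_id.mul continuous_const) continuous_id)

lemma self_mem_corner {e : X} (hes : star e = e) (hee : e * e = e) :
    e ∈ corner e hes := ⟨hee, hee⟩

noncomputable def cornerMap (ρ : X →⋆ₙₐ[ℂ] Y) (e : X) (hes : star e = e) (g : Y)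
    (hgs : star g = g) (hg : ρ e = g) : ↥(corner e hes) →⋆ₙₐ[ℂ] ↥(corner g hgs) where
  toFun x := ⟨ρ ↑x, by rw [← hg, ← map_mul, x.2.1], by rw [← hg, ← map_mul, x.2.2]⟩
  map_add' x y := Subtype.ext <| by simp
  map_zero' := Subtype.ext <| by simp
  map_mul' x y := Subtype.ext <| by simp
  map_smul' c x := Subtype.ext <| by simp
  map_star' x := Subtype.ext <| by simp [map_star]

@[simp] lemma cornerMap_coe (ρ : X →⋆ₙₐ[ℂ] Y) (e : X) (hes : star e = e) (g : Y)
    (hgs : star g = g) (hg : ρ e = g) (x : ↥(corner e hes)) :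
    (cornerMap ρ e hes g hgs hg x : Y) = ρ ↑x := rfl

lemma cornerMap_surjective (ρ : X →⋆ₙₐ[ℂ] Y) (e : X) (hes : star e = e) (hee : e * e = e)
    (g : Y) (hgs : star g = g) (hg : ρ e = g) (hρ : Function.Surjective ρ) :
    Function.Surjective (cornerMap ρ e hes g hgs hg) := by
  rintro ⟨y, hy1, hy2⟩
  obtain ⟨x, rfl⟩ := hρ y
  refine ⟨⟨e * x * e, ?_, ?_⟩, ?_⟩
  · rw [← mul_assoc, ← mul_assoc, hee]
  · rw [mul_assoc, mul_assoc, hee, ← mul_assoc]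
  · refine Subtype.ext ?_
    simp only [cornerMap_coe]
    rw [map_mul, map_mul, hg, mul_assoc, hy2, hy1]

section Unital
variable (e : X) (hes : star e = e) (hee : e * e = e)

noncomputable def cornerRing : Ring ↥(corner e hes) :=
  { (inferInstance : NonUnitalRing ↥(corner e hes)) with
    one := ⟨e, hee, hee⟩
    one_mul := fun x => Subtype.ext x.2.1
    mul_one := fun x => Subtype.ext x.2.2 }

noncomputable def cornerNormedRing : NormedRing ↥(corner e hes) :=
  letI := cornerRing e hes hee
  { (inferInstance : NonUnitalNormedRing ↥(corner e hes)),
    (inferInstance : Ring ↥(corner e hes)) with }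

attribute [reducible] cornerRing cornerNormedRing

noncomputable def cornerNormedAlgebra :
    letI := cornerNormedRing e hes hee
    NormedAlgebra ℂ ↥(corner e hes) :=
  letI := cornerNormedRing e hes hee
  { Algebra.ofModule (fun c x y => smul_mul_assoc c x y) (fun c x y => mul_smul_comm c x y) with
    norm_smul_le := fun c x => norm_smul_le c x }

attribute [reducible] cornerNormedAlgebra

noncomputable def cornerCStarRing : CStarRing ↥(corner e hes) where
  norm_mul_self_le x := CStarRing.norm_star_mul_self (x := (x : X)) |>.symm.le

end Unital
end CStar

section Ext
variable {X : Type*} [NonUnitalCStarAlgebra X]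
variable {A : Type*} [NonUnitalNormedRing A] [StarRing A]
    [NormedSpace ℂ A] [IsScalarTower ℂ A A] [SMulCommClass ℂ A A] [StarModule ℂ A]

noncomputable def unitalExt (e : X) (hes : star e = e) (hee : e * e = e)
    (ψ : A →⋆ₙₐ[ℂ] ↥(corner e hes)) : Unitization ℂ A →⋆ₙₐ[ℂ] X where
  toFun x := (ψ x.snd : X) + x.fst • e
  map_add' x y := by
    simp only [Unitization.snd_add, Unitization.fst_add, map_add, add_smul]
    push_cast
    abel
  map_zero' := by simp
  map_mul' x y := by
    have h1 : e * (ψ y.snd : X) = (ψ y.snd : X) := (ψ y.snd).2.1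
    have h2 : (ψ x.snd : X) * e = (ψ x.snd : X) := (ψ x.snd).2.2
    simp only [Unitization.snd_mul, Unitization.fst_mul, map_add, map_smul, map_mul]
    push_cast
    rw [mul_add, add_mul, add_mul]
    simp only [smul_mul_assoc, mul_smul_comm, smul_smul, h1, h2, hee, mul_comm]
    abel
  map_smul' c x := by
    simp only [Unitization.snd_smul, Unitization.fst_smul, map_smul, smul_add, smul_smul]
    push_cast
    simp
  map_star' x := by
    simp only [Unitization.snd_star, Unitization.fst_star, map_star, star_add, star_smul, hes]
    push_cast
    rfl

@[simp] lemma unitalExt_apply (e : X) (hes : star e = e) (hee : e * e = e)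
    (ψ : A →⋆ₙₐ[ℂ] ↥(corner e hes)) (x : Unitization ℂ A) :
    unitalExt e hes hee ψ x = (ψ x.snd : X) + x.fst • e := rfl

end Ext
end WSPAux

set_option maxHeartbeats 1000000 in
/-- A separable C*-algebra `A` is WSP1 if and only if its (minimal) unitization
`Ã = Unitization ℂ A` is weakly semiprojective. -/
theorem isWSP1_iff_isWSP_unitization
    (A : Type u) [NonUnitalNormedRing A] [StarRing A] [CStarRing A] [CompleteSpace A]
    [NormedSpace ℂ A] [IsScalarTower ℂ A A] [SMulCommClass ℂ A A] [StarModule ℂ A]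
    [TopologicalSpace.SeparableSpace A] :
    IsWSP1.{u, v} A ↔ IsWSP.{u, v} (Unitization ℂ A) := by
  constructor
  · -- hard direction

    intro hA
    intro B _iB1 _iB2 _iB3 _iB4 _iB5 _iB6 _iB7 _iB8 _iB9 C _iC1 _iC2 _iC3 _iC4 _iC5 _iC6 _iC7 _iC8
      D _iD1 _iD2 _iD3 _iD4 _iD5 _iD6 _iD7 _iD8 q p π hq hp hπ hmono hker φ
    letI : NonUnitalCStarAlgebra B := {}
    letI : NonUnitalCStarAlgebra D := {}
    letI instC : ∀ n, NonUnitalCStarAlgebra (C n) := fun n => {}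
    have hπq : ∀ n (b : B), π n (q n b) = p b := fun n b => DFunLike.congr_fun (hπ n) b
    have kermono : ∀ m n, m ≤ n → ∀ b : B, q m b = 0 → q n b = 0 := by
      intro m n hmn
      induction hmn with
      | refl => exact fun b hb => hb
      | step h ih => exact fun b hb => hmono _ (ih b hb)
    have hkey : ∀ x : B, p x = 0 → ∀ ε : ℝ, 0 < ε → ∃ N, ∀ n, N ≤ n → ‖q n x‖ < ε := by
      intro x hx ε hε
      have hxc : x ∈ closure (⋃ n, {b : B | q n b = 0}) := by rw [← hker]; exact hx
      obtain ⟨y, hy, hxy⟩ := Metric.mem_closure_iff.mp hxc ε hε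
      obtain ⟨m, hym⟩ := Set.mem_iUnion.mp hy
      refine ⟨m, fun n hn => ?_⟩
      have h0 : q n y = 0 := kermono m n hn y hym
      calc ‖q n x‖ = ‖q n (x - y)‖ := by rw [map_sub, h0, sub_zero]
        _ ≤ ‖x - y‖ := NonUnitalStarAlgHom.norm_apply_le (q n) (x - y)
        _ < ε := by rwa [← dist_eq_norm]
    -- the image of the unit, a projection in `D`
    set h := φ (1 : Unitization ℂ A) with hh_def
    have hstarh : star h = h := by rw [hh_def, ← map_star, star_one]
    have hmulh : h * h = h := by rw [hh_def, ← map_mul, one_mul]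
    -- a selfadjoint lift of `h` in `B`
    obtain ⟨b₀, hb₀⟩ := hp h
    set b : B := (2 : ℂ)⁻¹ • (b₀ + star b₀) with hb_def
    have hbsa : IsSelfAdjoint b := by
      show star b = b
      rw [hb_def, star_smul, star_add, star_star, add_comm (star b₀) b₀]
      congr 1
      simp
    have hpb : p b = h := by
      rw [hb_def, map_smul, map_add, map_star, hb₀, hstarh, ← two_smul ℂ h, smul_smul]
      norm_num
    have hpbb : p (b * b - b) = 0 := by rw [map_sub, map_mul, hpb, hmulh, sub_self]
    obtain ⟨n₀, hn₀⟩ := hkey (b * b - b) hpbb (3/16) (by norm_num)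
    -- a projection `e` in `C n₀` lifting `h`
    set y : C n₀ := q n₀ b with hy_def
    have hysa : IsSelfAdjoint y := hbsa.map (q n₀)
    have hyy : ‖y * y - y‖ < 3/16 := by
      rw [hy_def, ← map_mul, ← map_sub]
      exact hn₀ n₀ le_rfl
    set e : C n₀ := cfcₙ WSPAux.f y with he_def
    have hee : e * e = e := WSPAux.cfcf_sq hysa hyy
    have hes : star e = e := WSPAux.cfcf_star hysa
    have hπny : π n₀ y = h := by rw [hy_def, hπq, hpb]
    have hπe : π n₀ e = h := by
      rw [he_def, WSPAux.map_cfcf (π n₀) hysa, hπny]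
      exact WSPAux.cfcf_proj hstarh hmulh
    -- the induced maps from `C n₀` onto the later quotients
    have hrex : ∀ k, ∃ r : C n₀ →⋆ₙₐ[ℂ] C (n₀ + k), ∀ bb, r (q n₀ bb) = q (n₀ + k) bb :=
      fun k => WSPAux.exists_factor (q n₀) (q (n₀ + k)) (hq n₀)
        (fun bb hb => kermono n₀ (n₀ + k) (Nat.le_add_right _ _) bb hb)
    choose r hr using hrex
    have hrsurj : ∀ k, Function.Surjective (r k) := by
      intro k c
      obtain ⟨bb, rfl⟩ := hq (n₀ + k) c
      exact ⟨q n₀ bb, hr k bb⟩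
    have hπr : ∀ k (c : C n₀), π (n₀ + k) (r k c) = π n₀ c := by
      intro k c
      obtain ⟨bb, rfl⟩ := hq n₀ c
      rw [hr, hπq, hπq]
    have hfs : ∀ k, star (r k e) = r k e := fun k => by rw [← map_star, hes]
    have hff : ∀ k, r k e * r k e = r k e := fun k => by rw [← map_mul, hee]
    have hπf : ∀ k, π (n₀ + k) (r k e) = h := fun k => by rw [hπr, hπe]
    -- the corner system
    haveI hBc : IsClosed ((WSPAux.corner e hes : Set (C n₀))) := WSPAux.corner_isClosed e hes
    letI : Ring ↥(WSPAux.corner e hes) := WSPAux.cornerRing e hes hee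
    letI : NormedRing ↥(WSPAux.corner e hes) := WSPAux.cornerNormedRing e hes hee
    letI : NormedAlgebra ℂ ↥(WSPAux.corner e hes) := WSPAux.cornerNormedAlgebra e hes hee
    letI : CStarRing ↥(WSPAux.corner e hes) := WSPAux.cornerCStarRing e hes
    haveI : CompleteSpace ↥(WSPAux.corner e hes) := hBc.completeSpace_coe
    haveI : TopologicalSpace.SeparableSpace (C n₀) :=
      (hq n₀).denseRange.separableSpace (WSPAux.cont (q n₀))
    haveI : TopologicalSpace.SeparableSpace ↥(WSPAux.corner e hes) :=
      (TopologicalSpace.IsSeparable.of_separableSpace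
        ((WSPAux.corner e hes : Set (C n₀)))).separableSpace
    letI iC's : ∀ k, CStarRing ↥(WSPAux.corner (r k e) (hfs k)) :=
      fun k => WSPAux.cornerCStarRing (r k e) (hfs k)
    haveI iC'c : ∀ k, CompleteSpace ↥(WSPAux.corner (r k e) (hfs k)) :=
      fun k => (WSPAux.corner_isClosed (r k e) (hfs k)).completeSpace_coe
    letI : CStarRing ↥(WSPAux.corner h hstarh) := WSPAux.cornerCStarRing h hstarh
    haveI : CompleteSpace ↥(WSPAux.corner h hstarh) :=
      (WSPAux.corner_isClosed h hstarh).completeSpace_coe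
    -- the maps of the corner system
    let q' : ∀ k, ↥(WSPAux.corner e hes) →⋆ₙₐ[ℂ] ↥(WSPAux.corner (r k e) (hfs k)) :=
      fun k => WSPAux.cornerMap (r k) e hes (r k e) (hfs k) rfl
    let p' : ↥(WSPAux.corner e hes) →⋆ₙₐ[ℂ] ↥(WSPAux.corner h hstarh) :=
      WSPAux.cornerMap (π n₀) e hes h hstarh hπe
    let π' : ∀ k, ↥(WSPAux.corner (r k e) (hfs k)) →⋆ₙₐ[ℂ] ↥(WSPAux.corner h hstarh) :=
      fun k => WSPAux.cornerMap (π (n₀ + k)) (r k e) (hfs k) h hstarh (hπf k)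
    have hq' : ∀ k, Function.Surjective (q' k) :=
      fun k => WSPAux.cornerMap_surjective (r k) e hes hee (r k e) (hfs k) rfl (hrsurj k)
    have hpn₀surj : Function.Surjective (π n₀) := by
      intro d
      obtain ⟨bb, rfl⟩ := hp d
      exact ⟨q n₀ bb, hπq n₀ bb⟩
    have hp' : Function.Surjective p' :=
      WSPAux.cornerMap_surjective (π n₀) e hes hee h hstarh hπe hpn₀surj
    have hπ' : ∀ k, (π' k).comp (q' k) = p' := by
      intro k
      refine DFunLike.ext _ _ fun x => Subtype.ext ?_
      show π (n₀ + k) (r k (x : C n₀)) = π n₀ (x : C n₀)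
      exact hπr k _
    have hmono' : ∀ k, {x : ↥(WSPAux.corner e hes) | q' k x = 0} ⊆
        {x : ↥(WSPAux.corner e hes) | q' (k + 1) x = 0} := by
      intro k x hx
      have hx0 : r k (x : C n₀) = 0 := by
        have hx' : q' k x = 0 := hx
        have h2 := Subtype.ext_iff.mp hx'
        rwa [ZeroMemClass.coe_zero] at h2
      obtain ⟨bb, hbb⟩ := hq n₀ (x : C n₀)
      have h1 : q (n₀ + k) bb = 0 := by rw [← hr k bb, hbb]; exact hx0
      have h2 : q (n₀ + (k + 1)) bb = 0 :=
        kermono (n₀ + k) (n₀ + (k + 1)) (by omega) bb h1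
      show q' (k + 1) x = 0
      refine Subtype.ext ?_
      show r (k + 1) (x : C n₀) = 0
      rw [← hbb, hr]
      simpa using h2
    have hker' : {x : ↥(WSPAux.corner e hes) | p' x = 0} =
        closure (⋃ k, {x : ↥(WSPAux.corner e hes) | q' k x = 0}) := by
      ext x
      constructor
      · intro hx
        have hx0 : π n₀ (x : C n₀) = 0 := by
          have h2 := Subtype.ext_iff.mp (hx : p' x = 0)
          rwa [ZeroMemClass.coe_zero] at h2
        rw [closure_subtype, Metric.mem_closure_iff]
        intro ε hε
        obtain ⟨bb, hbb⟩ := hq n₀ (x : C n₀)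
        have hpbb0 : p bb = 0 := by rw [← hπq n₀ bb, hbb, hx0]
        have hbbc : bb ∈ closure (⋃ n, {b : B | q n b = 0}) := by rw [← hker]; exact hpbb0
        obtain ⟨w, hw, hbw⟩ := Metric.mem_closure_iff.mp hbbc ε hε
        obtain ⟨m, hwm⟩ := Set.mem_iUnion.mp hw
        have hwm' : q (n₀ + m) w = 0 := kermono m (n₀ + m) (Nat.le_add_left _ _) w hwm
        set c : C n₀ := e * q n₀ w * e with hc_def
        have hcmem : c ∈ WSPAux.corner e hes := by
          constructor
          · rw [hc_def, ← mul_assoc, ← mul_assoc, hee]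
          · rw [hc_def, mul_assoc, mul_assoc, hee, ← mul_assoc]
        have hcker : r m c = 0 := by
          rw [hc_def, map_mul, map_mul, hr, hwm', mul_zero, zero_mul]
        refine ⟨c, ⟨⟨c, hcmem⟩, Set.mem_iUnion.mpr ⟨m, Subtype.ext hcker⟩, rfl⟩, ?_⟩
        have hxe : e * q n₀ bb * e = (x : C n₀) := by rw [hbb, x.2.1, x.2.2]
        have hdiff : (x : C n₀) - c = e * q n₀ (bb - w) * e := by
          rw [← hxe, hc_def, map_sub, mul_sub, sub_mul]
        have hbound : ‖e * q n₀ (bb - w) * e‖ ≤ ‖q n₀ (bb - w)‖ := by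
          have he1 : ‖e‖ ≤ 1 := WSPAux.norm_proj_le_one hes hee
          calc ‖e * q n₀ (bb - w) * e‖ ≤ ‖e * q n₀ (bb - w)‖ * ‖e‖ := norm_mul_le _ _
            _ ≤ ‖e‖ * ‖q n₀ (bb - w)‖ * ‖e‖ :=
              mul_le_mul_of_nonneg_right (norm_mul_le _ _) (norm_nonneg _)
            _ ≤ 1 * ‖q n₀ (bb - w)‖ * 1 := by
              have h0 : (0:ℝ) ≤ ‖q n₀ (bb - w)‖ := norm_nonneg _
              have h0' : (0:ℝ) ≤ ‖e‖ := norm_nonneg _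
              nlinarith [mul_le_mul_of_nonneg_right he1 h0,
                mul_le_mul_of_nonneg_left he1 (mul_nonneg h0' h0)]
            _ = ‖q n₀ (bb - w)‖ := by ring
        calc dist (x : C n₀) c = ‖(x : C n₀) - c‖ := dist_eq_norm _ _
          _ = ‖e * q n₀ (bb - w) * e‖ := by rw [hdiff]
          _ ≤ ‖q n₀ (bb - w)‖ := hbound
          _ ≤ ‖bb - w‖ := NonUnitalStarAlgHom.norm_apply_le (q n₀) _
          _ < ε := by rwa [← dist_eq_norm]
      · intro hx
        have hTclosed : IsClosed {z : ↥(WSPAux.corner e hes) | π n₀ (z : C n₀) = 0} :=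
          isClosed_eq ((WSPAux.cont (π n₀)).comp continuous_subtype_val) continuous_const
        have hsub : (⋃ k, {z : ↥(WSPAux.corner e hes) | q' k z = 0}) ⊆
            {z : ↥(WSPAux.corner e hes) | π n₀ (z : C n₀) = 0} := by
          rintro z hz
          obtain ⟨k, hk⟩ := Set.mem_iUnion.mp hz
          have hk0 : r k (z : C n₀) = 0 := by
            have h2 := Subtype.ext_iff.mp (hk : q' k z = 0)
            rwa [ZeroMemClass.coe_zero] at h2
          show π n₀ (z : C n₀) = 0
          rw [← hπr k, hk0, map_zero]
        have := closure_minimal hsub hTclosed hx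
        exact Subtype.ext this
    -- the restricted morphism
    have hmemφ : ∀ a : A, φ ((a : Unitization ℂ A)) ∈ WSPAux.corner h hstarh := by
      intro a
      constructor
      · rw [hh_def, ← map_mul, one_mul]
      · rw [hh_def, ← map_mul, mul_one]
    let φ' : A →⋆ₙₐ[ℂ] ↥(WSPAux.corner h hstarh) :=
      { toFun := fun a => ⟨φ ((a : Unitization ℂ A)), hmemφ a⟩
        map_add' := fun a a' => Subtype.ext <| by simp
        map_zero' := Subtype.ext <| by simp
        map_mul' := fun a a' => Subtype.ext <| by simp
        map_smul' := fun ca a => Subtype.ext <| by simp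
        map_star' := fun a => Subtype.ext <| by simp [map_star] }
    obtain ⟨ψ', hψ'⟩ := hA ↥(WSPAux.corner e hes) (fun k => ↥(WSPAux.corner (r k e) (hfs k)))
      ↥(WSPAux.corner h hstarh) q' p' π' hq' hp' hπ' hmono' hker' φ'
    -- assemble the lifts on the unitization
    let Θ : ∀ k, Unitization ℂ A →⋆ₙₐ[ℂ] C (n₀ + k) :=
      fun k => WSPAux.unitalExt (r k e) (hfs k) (hff k) (ψ' k)
    have hbase : ∀ x : Unitization ℂ A,
        Filter.Tendsto (fun k => π (n₀ + k) (Θ k x)) Filter.atTop (nhds (φ x)) := by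
      intro x
      have h1 : ∀ k, π (n₀ + k) (Θ k x) =
          ((π' k (ψ' k x.snd) : D)) + x.fst • h := by
        intro k
        show π (n₀ + k) ((ψ' k x.snd : C (n₀ + k)) + x.fst • r k e) = _
        rw [map_add, map_smul, hπf]
        rfl
      have h2 : Filter.Tendsto (fun k => ((π' k (ψ' k x.snd) : D))) Filter.atTop
          (nhds ((φ' x.snd : D))) :=
        (continuous_subtype_val.tendsto _).comp (hψ' x.snd)
      have h3 : (φ' x.snd : D) + x.fst • h = φ x := by
        have hinl : (Unitization.inl x.fst : Unitization ℂ A) = x.fst • 1 := by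
          refine Unitization.ext ?_ ?_ <;> simp
        show φ ((x.snd : Unitization ℂ A)) + x.fst • h = φ x
        rw [hh_def, ← map_smul, ← map_add]
        congr 1
        rw [← hinl, add_comm]
        exact Unitization.inl_fst_add_inr_snd_eq x
      have h4 := h2.add (tendsto_const_nhds (x := x.fst • h))
      rw [h3] at h4
      exact h4.congr fun k => (h1 k).symm
    refine ⟨fun n => if hn : n₀ ≤ n then
        cast (congrArg (fun m => Unitization ℂ A →⋆ₙₐ[ℂ] C m) (Nat.add_sub_cancel' hn))
          (Θ (n - n₀))
      else 0, fun x => ?_⟩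
    have hcast : ∀ (mm nn : ℕ) (hmn : mm = nn)
        (θ : Unitization ℂ A →⋆ₙₐ[ℂ] C mm) (xx : Unitization ℂ A),
        π nn ((cast (congrArg (fun m => Unitization ℂ A →⋆ₙₐ[ℂ] C m) hmn) θ) xx) =
          π mm (θ xx) := by
      rintro mm nn rfl θ xx
      rfl
    refine Filter.Tendsto.congr' ?_ ((hbase x).comp (Filter.tendsto_sub_atTop_nat n₀))
    filter_upwards [Filter.eventually_ge_atTop n₀] with n hn
    rw [dif_pos hn]
    exact (hcast _ _ (Nat.add_sub_cancel' hn) (Θ (n - n₀)) x).symm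

  · -- easy direction
    intro hW
    intro B _iB1 _iB2 _iB3 _iB4 _iB5 _iB6 _iB7 C _iC1 _iC2 _iC3 _iC4 _iC5 _iC6 _iC7 _iC8
      D _iD1 _iD2 _iD3 _iD4 _iD5 _iD6 _iD7 _iD8 q p π hq hp hπ hmono hker φ
    -- the image of the unit of `B` is a unit for `D` since `p` is surjective
    set u : D := p 1 with hu_def
    have hul : ∀ d : D, u * d = d := by
      intro d
      obtain ⟨b, rfl⟩ := hp d
      rw [hu_def, ← map_mul, one_mul]
    have hur : ∀ d : D, d * u = d := by
      intro d
      obtain ⟨b, rfl⟩ := hp d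
      rw [hu_def, ← map_mul, mul_one]
    have hustar : star u = u := by rw [hu_def, ← map_star, star_one]
    -- extend `φ` to the unitization
    let φhat : Unitization ℂ A →⋆ₙₐ[ℂ] D :=
      { toFun := fun x => φ x.snd + x.fst • u
        map_add' := fun x y => by
          simp only [Unitization.snd_add, Unitization.fst_add, map_add, add_smul]
          abel
        map_zero' := by simp
        map_mul' := fun x y => by
          simp only [Unitization.snd_mul, Unitization.fst_mul, map_add, map_smul, map_mul]
          rw [mul_add, add_mul, add_mul]
          simp only [smul_mul_assoc, mul_smul_comm, smul_smul, hul, hur, mul_comm]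
          abel
        map_smul' := fun c x => by
          simp only [Unitization.snd_smul, Unitization.fst_smul, map_smul, smul_add, smul_smul]
          simp
        map_star' := fun x => by
          simp only [Unitization.snd_star, Unitization.fst_star, map_star, star_add, star_smul,
            hustar] }
    obtain ⟨Ψ, hΨ⟩ := hW B C D q p π hq hp hπ hmono hker φhat
    refine ⟨fun n => (Ψ n).comp (Unitization.inrNonUnitalStarAlgHom ℂ A), fun a => ?_⟩
    have := hΨ ((a : Unitization ℂ A))
    have heq : φhat ((a : Unitization ℂ A)) = φ a := by
      show φ (Unitization.inr a : Unitization ℂ A).snd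
          + (Unitization.inr a : Unitization ℂ A).fst • u = φ a
      simp
    rw [heq] at this
    exact this
end

section
/- Let A be a separable unital C*-algebra. Then A is WSP1 if and only if A is weakly semiprojective. -/
universe u v

section Aux

open Unitization Filter Topology

variable {E : Type*} [NonUnitalNormedRing E] [StarRing E] [CStarRing E] [CompleteSpace E]
  [NormedSpace ℂ E] [IsScalarTower ℂ E E] [SMulCommClass ℂ E E] [StarModule ℂ E]
  {F : Type*} [NonUnitalNormedRing F] [StarRing F] [CStarRing F] [CompleteSpace F]
  [NormedSpace ℂ F] [IsScalarTower ℂ F F] [SMulCommClass ℂ F F] [StarModule ℂ F]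

lemma myStarMap_fst (f : E →⋆ₙₐ[ℂ] F) (x : Unitization ℂ E) :
    (Unitization.starMap f x).fst = x.fst := by
  induction x using Unitization.ind with
  | inl_add_inr r b =>
    simp only [map_add, Unitization.starMap_inl, Unitization.starMap_inr,
      Unitization.algebraMap_eq_inl, Unitization.fst_add, Unitization.fst_inl,
      Unitization.fst_inr, add_zero]

lemma myStarMap_snd (f : E →⋆ₙₐ[ℂ] F) (x : Unitization ℂ E) :
    (Unitization.starMap f x).snd = f x.snd := by
  induction x using Unitization.ind with
  | inl_add_inr r b =>
    simp only [map_add, Unitization.starMap_inl, Unitization.starMap_inr,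
      Unitization.algebraMap_eq_inl, Unitization.snd_add, Unitization.snd_inl,
      Unitization.snd_inr, zero_add]

lemma myZero_iff (x : Unitization ℂ E) : x = 0 ↔ x.fst = 0 ∧ x.snd = 0 := by
  constructor
  · rintro rfl; simp
  · rintro ⟨h1, h2⟩; exact Unitization.ext (by simpa using h1) (by simpa using h2)

lemma myCont_fst : Continuous (fun x : Unitization ℂ E => x.fst) :=
  continuous_fst.comp (Unitization.uniformEquivProd : Unitization ℂ E ≃ᵤ ℂ × E).continuous

lemma myCont_snd : Continuous (fun x : Unitization ℂ E => x.snd) :=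
  continuous_snd.comp (Unitization.uniformEquivProd : Unitization ℂ E ≃ᵤ ℂ × E).continuous

/-- Extract the `snd`-part of a hom into a unitization whose `fst`-part vanishes. -/
def homFromSnd {A : Type*} [NonUnitalNormedRing A] [StarRing A]
    [NormedSpace ℂ A] [IsScalarTower ℂ A A] [SMulCommClass ℂ A A] [StarModule ℂ A]
    (f : A →⋆ₙₐ[ℂ] Unitization ℂ E) (h : ∀ a, (f a).fst = 0) : A →⋆ₙₐ[ℂ] E where
  toFun a := (f a).snd
  map_smul' c a := by simp
  map_zero' := by simp
  map_add' a b := by simp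
  map_mul' a b := by simp [Unitization.snd_mul, h]
  map_star' a := by
    exact (congrArg (fun x : Unitization ℂ E => x.snd) (map_star f a)).trans (Unitization.snd_star (f a))

end Aux


open Unitization Filter Topology

/-- Let `A` be a separable unital C*-algebra.  Then `A` is WSP1 if and only if `A` is
weakly semiprojective. -/
theorem isWSP1_iff_isWSP_of_unital
    (A : Type u) [NormedRing A] [StarRing A] [CStarRing A] [CompleteSpace A]
    [NormedAlgebra ℂ A] [StarModule ℂ A] [TopologicalSpace.SeparableSpace A] :
    IsWSP1.{u, v} A ↔ IsWSP.{u, v} A := by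
  constructor
  · -- WSP1 → WSP
    intro h
    intro B _ _ _ _ _ _ _ _ _ C _ _ _ _ _ _ _ _ D _ _ _ _ _ _ _ _ q p π hq hp hπ hmono hker φ
    classical
    -- work with unitizations
    let q' : ∀ n, Unitization ℂ B →⋆ₙₐ[ℂ] Unitization ℂ (C n) := fun n =>
      (Unitization.starMap (q n)).toNonUnitalStarAlgHom
    let p' : Unitization ℂ B →⋆ₙₐ[ℂ] Unitization ℂ D :=
      (Unitization.starMap p).toNonUnitalStarAlgHom
    let π' : ∀ n, Unitization ℂ (C n) →⋆ₙₐ[ℂ] Unitization ℂ D := fun n =>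
      (Unitization.starMap (π n)).toNonUnitalStarAlgHom
    haveI : TopologicalSpace.SeparableSpace (Unitization ℂ B) :=
      ((Unitization.uniformEquivProd : Unitization ℂ B ≃ᵤ ℂ × B).symm.surjective.denseRange).separableSpace
        (Unitization.uniformEquivProd : Unitization ℂ B ≃ᵤ ℂ × B).symm.continuous
    have hq' : ∀ n, Function.Surjective (q' n) := fun n =>
      Unitization.starMap_surjective (hq n)
    have hp' : Function.Surjective p' := Unitization.starMap_surjective hp
    have hπ' : ∀ n, (π' n).comp (q' n) = p' := by
      intro n
      refine NonUnitalStarAlgHom.ext fun x => ?_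
      show Unitization.starMap (π n) (Unitization.starMap (q n) x) = Unitization.starMap p x
      rw [← hπ n, Unitization.starMap_comp]
      rfl
    have hkq : ∀ n (x : Unitization ℂ B), q' n x = 0 ↔ x.fst = 0 ∧ q n x.snd = 0 := by
      intro n x
      rw [show q' n x = Unitization.starMap (q n) x from rfl, myZero_iff,
        myStarMap_fst, myStarMap_snd]
    have hkp : ∀ x : Unitization ℂ B, p' x = 0 ↔ x.fst = 0 ∧ p x.snd = 0 := by
      intro x
      rw [show p' x = Unitization.starMap p x from rfl, myZero_iff,
        myStarMap_fst, myStarMap_snd]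
    have hmono' : ∀ n, {x : Unitization ℂ B | q' n x = 0} ⊆ {x | q' (n + 1) x = 0} := by
      intro n x hx
      rw [Set.mem_setOf_eq, hkq] at hx ⊢
      exact ⟨hx.1, hmono n hx.2⟩
    have hker' : {x : Unitization ℂ B | p' x = 0} =
        closure (⋃ n, {x : Unitization ℂ B | q' n x = 0}) := by
      let e : Unitization ℂ B ≃ₜ ℂ × B :=
        (Unitization.uniformEquivProd : Unitization ℂ B ≃ᵤ ℂ × B).toHomeomorph
      have h1 : ∀ n, {x : Unitization ℂ B | q' n x = 0}
          = e ⁻¹' (({(0 : ℂ)} : Set ℂ) ×ˢ {b | q n b = 0}) := by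
        intro n
        ext x
        simp only [Set.mem_setOf_eq, hkq, Set.mem_preimage, Set.mem_prod, Set.mem_singleton_iff]
        rfl
      have h2 : {x : Unitization ℂ B | p' x = 0}
          = e ⁻¹' (({(0 : ℂ)} : Set ℂ) ×ˢ {b | p b = 0}) := by
        ext x
        simp only [Set.mem_setOf_eq, hkp, Set.mem_preimage, Set.mem_prod, Set.mem_singleton_iff]
        rfl
      calc {x : Unitization ℂ B | p' x = 0}
          = e ⁻¹' (({(0 : ℂ)} : Set ℂ) ×ˢ {b | p b = 0}) := h2
        _ = e ⁻¹' (({(0 : ℂ)} : Set ℂ) ×ˢ closure (⋃ n, {b | q n b = 0})) := by rw [← hker]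
        _ = e ⁻¹' closure (({(0 : ℂ)} : Set ℂ) ×ˢ (⋃ n, {b | q n b = 0})) := by
            rw [closure_prod_eq, closure_singleton]
        _ = closure (e ⁻¹' (({(0 : ℂ)} : Set ℂ) ×ˢ (⋃ n, {b | q n b = 0}))) :=
            e.preimage_closure _
        _ = closure (⋃ n, e ⁻¹' (({(0 : ℂ)} : Set ℂ) ×ˢ {b | q n b = 0})) := by
            rw [Set.prod_iUnion, Set.preimage_iUnion]
        _ = closure (⋃ n, {x : Unitization ℂ B | q' n x = 0}) := by
            simp only [← h1]
    obtain ⟨ψ', hψ'⟩ := h (Unitization ℂ B) (fun n => Unitization ℂ (C n)) (Unitization ℂ D)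
      q' p' π' hq' hp' hπ' hmono' hker'
      ((Unitization.inrNonUnitalStarAlgHom ℂ D).comp φ)
    -- the scalar parts tend to zero
    have hfst : ∀ a, Tendsto (fun n => (ψ' n a).fst) atTop (nhds 0) := by
      intro a
      have h0 := (myCont_fst.tendsto _).comp (hψ' a)
      simp only [Function.comp_def] at h0
      have heq : ∀ n, (π' n (ψ' n a)).fst = (ψ' n a).fst := fun n =>
        myStarMap_fst (π n) (ψ' n a)
      simp only [heq, NonUnitalStarAlgHom.comp_apply, Unitization.inrNonUnitalStarAlgHom_apply,
        Unitization.fst_inr] at h0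
      exact h0
    -- scalar part at 1 is idempotent, hence eventually zero
    have hidem : ∀ n, (ψ' n 1).fst = 0 ∨ (ψ' n 1).fst = 1 := by
      intro n
      have h1 : (ψ' n 1).fst * (ψ' n 1).fst = (ψ' n 1).fst := by
        rw [← Unitization.fst_mul, ← map_mul, one_mul]
      have h2 : (ψ' n 1).fst * ((ψ' n 1).fst - 1) = 0 := by
        rw [mul_sub, mul_one, h1, sub_self]
      rcases mul_eq_zero.mp h2 with h3 | h3
      · exact Or.inl h3
      · exact Or.inr (sub_eq_zero.mp h3)
    have hev : ∀ᶠ n in atTop, ∀ a, (ψ' n a).fst = 0 := by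
      have hne : ∀ᶠ n in atTop, (ψ' n 1).fst ≠ 1 := (hfst 1).eventually_ne (by norm_num)
      filter_upwards [hne] with n hn a
      have h1 : (ψ' n 1).fst = 0 := (hidem n).resolve_right hn
      have h2 : ψ' n a = ψ' n 1 * ψ' n a := by rw [← map_mul, one_mul]
      rw [h2, Unitization.fst_mul, h1, zero_mul]
    refine ⟨fun n => if hn : ∀ a, (ψ' n a).fst = 0 then homFromSnd (ψ' n) hn else 0, fun a => ?_⟩
    have key : Tendsto (fun n => π n ((ψ' n a).snd)) atTop (nhds (φ a)) := by
      have h0 := (myCont_snd.tendsto _).comp (hψ' a)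
      simp only [Function.comp_def] at h0
      have heq : ∀ n, (π' n (ψ' n a)).snd = π n ((ψ' n a).snd) := fun n =>
        myStarMap_snd (π n) (ψ' n a)
      simp only [heq, NonUnitalStarAlgHom.comp_apply, Unitization.inrNonUnitalStarAlgHom_apply,
        Unitization.snd_inr] at h0
      exact h0
    refine key.congr' ?_
    filter_upwards [hev] with n hn
    rw [dif_pos hn]
    rfl
  · -- WSP → WSP1
    intro h
    intro B _ _ _ _ _ _ _ C _ _ _ _ _ _ _ _ D _ _ _ _ _ _ _ _ q p π hq hp hπ hmono hker φ
    exact h B C D q p π hq hp hπ hmono hker φ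
end
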